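/- Fix m ≥ 3, 0 ≤ j ≤ m-2, m_j = m-j-1. Let P = ∏_{i=1}^{m_j} R_{i;j}(r_i z, v_i) where z ∈ S¹, r_i ≥ 0, r_i² + |v_i|² = 1, and the product is taken in increasing order of i. Then the (j+1+s, j+1) entries of P (the first column of the nontrivial block) are: entry s = 0 equals r_1⋯r_{m_j} z^{m_j}; entry s with 1 ≤ s ≤ m_j - 1 equals -r_{s+1}⋯r_{m_j} z^{m_j - s} conj(v_s); and entry s = m_j equals -conj(v_{m_j}). -/
import Mathlib


open Matrix

/-- The matrix R_{i;j}(a, v) ∈ SU(m): the identity matrix except in rows/columns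
j and j+i (0-indexed), where [[a, v], [-conj v, conj a]] is embedded. -/
noncomputable def Rblock (m j i : ℕ) (a v : ℂ) : Matrix (Fin m) (Fin m) ℂ :=
  Matrix.of fun p q =>
    if (p : ℕ) = j ∧ (q : ℕ) = j then a
    else if (p : ℕ) = j ∧ (q : ℕ) = j + i then v
    else if (p : ℕ) = j + i ∧ (q : ℕ) = j then -((starRingEnd ℂ) v)
    else if (p : ℕ) = j + i ∧ (q : ℕ) = j + i then (starRingEnd ℂ) a
    else if p = q then 1 else 0

lemma Rblock_col_j {m j : ℕ} (k : ℕ) (a v : ℂ) (hjm : j < m) (q : Fin m) :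
    Rblock m j (k+1) a v q ⟨j, hjm⟩ =
      (if (q:ℕ) = j then a else 0) + (if (q:ℕ) = j + (k+1) then -(starRingEnd ℂ) v else 0) := by
  have hval : ((⟨j, hjm⟩ : Fin m) : ℕ) = j := rfl
  have hne : (q = (⟨j, hjm⟩ : Fin m)) ↔ (q:ℕ) = j := ⟨fun h => by rw [h], fun h => Fin.ext h⟩
  simp only [Rblock, Matrix.of_apply, hval, hne]
  by_cases hq : (q:ℕ) = j
  · have : ¬ (q:ℕ) = j + (k+1) := by omega
    simp [hq, this]
  · by_cases hq2 : (q:ℕ) = j + (k+1)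
    · have h1 : ¬ j = j + (k+1) := by omega
      simp [hq, hq2, h1]
    · simp [hq, hq2]

lemma Rblock_col_other {m j : ℕ} (i : ℕ) (a v : ℂ) (c : Fin m)
    (hc1 : (c:ℕ) ≠ j) (hc2 : (c:ℕ) ≠ j + i) (q : Fin m) :
    Rblock m j i a v q c = if q = c then 1 else 0 := by
  simp only [Rblock, Matrix.of_apply]
  have h1 : ¬((q:ℕ) = j ∧ (c:ℕ) = j) := fun h => hc1 h.2
  have h2 : ¬((q:ℕ) = j ∧ (c:ℕ) = j + i) := fun h => hc2 h.2
  have h3 : ¬((q:ℕ) = j + i ∧ (c:ℕ) = j) := fun h => hc1 h.2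
  have h4 : ¬((q:ℕ) = j + i ∧ (c:ℕ) = j + i) := fun h => hc2 h.2
  simp [h1, h2, h3, h4]

lemma prod_col_id {m j : ℕ} (F : ℕ → Matrix (Fin m) (Fin m) ℂ)
    (hF : ∀ i, ∃ a v, F i = Rblock m j (i+1) a v)
    (k : ℕ) (c : Fin m) (hc : j + k < (c:ℕ)) (p : Fin m) :
    ((List.range k).map F).prod p c = if p = c then 1 else 0 := by
  induction k with
  | zero => simp [Matrix.one_apply]
  | succ k ih =>
    rw [List.range_succ, List.map_append, List.prod_append]
    simp only [List.map_cons, List.map_nil, List.prod_cons, List.prod_nil, mul_one]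
    rw [Matrix.mul_apply]
    obtain ⟨a, v, hFk⟩ := hF k
    have hcol : ∀ q, F k q c = if q = c then 1 else 0 := by
      intro q
      rw [hFk]
      exact Rblock_col_other _ _ _ _ (by omega) (by omega) q
    simp only [hcol, mul_ite, mul_one, mul_zero]
    rw [Finset.sum_ite_eq' Finset.univ c (fun q => ((List.range k).map F).prod p q)]
    simp [ih (by omega)]

lemma sum_ite_val {m c : ℕ} (hc : c < m) (f : Fin m → ℂ) :
    (∑ q : Fin m, if (q:ℕ) = c then f q else 0) = f ⟨c, hc⟩ := by
  rw [Finset.sum_eq_single (⟨c, hc⟩ : Fin m)]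
  · simp
  · intro b _ hb
    have : ¬ (b:ℕ) = c := fun h => hb (Fin.ext h)
    simp [this]
  · simp

lemma prod_col_j {m j : ℕ} (z : ℂ) (r : ℕ → ℝ) (v : ℕ → ℂ)
    (k : ℕ) (hk : j + k < m) (p : Fin m) :
    ((List.range k).map (fun i => Rblock m j (i + 1) ((r i : ℂ) * z) (v i))).prod
        p ⟨j, by omega⟩ =
      if (p:ℕ) = j then ∏ i ∈ Finset.range k, ((r i : ℂ) * z)
      else if j < (p:ℕ) ∧ (p:ℕ) ≤ j + k then
        -((∏ i ∈ Finset.Ico ((p:ℕ) - j) k, ((r i : ℂ) * z)) *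
          (starRingEnd ℂ) (v ((p:ℕ) - j - 1)))
      else 0 := by
  induction k with
  | zero =>
    have hne : (p = (⟨j, by omega⟩ : Fin m)) ↔ (p:ℕ) = j :=
      ⟨fun h => by rw [h], fun h => Fin.ext h⟩
    simp only [List.range_zero, List.map_nil, List.prod_nil, Matrix.one_apply, hne]
    by_cases hp : (p:ℕ) = j
    · simp [hp]
    · simp only [hp, if_false]
      rw [if_neg (show ¬ (j < (p:ℕ) ∧ (p:ℕ) ≤ j + 0) from by omega)]
  | succ k ih =>
    have hk' : j + k < m := by omega
    set F := fun i => Rblock m j (i + 1) ((r i : ℂ) * z) (v i) with hF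
    rw [List.range_succ, List.map_append, List.prod_append]
    simp only [List.map_cons, List.map_nil, List.prod_cons, List.prod_nil, mul_one]
    rw [Matrix.mul_apply]
    have hcol : ∀ q : Fin m, F k q ⟨j, by omega⟩ =
        (if (q:ℕ) = j then (r k : ℂ) * z else 0) +
        (if (q:ℕ) = j + (k+1) then -(starRingEnd ℂ) (v k) else 0) :=
      fun q => Rblock_col_j k _ _ _ q
    simp only [hcol, mul_add, mul_ite, mul_zero, Finset.sum_add_distrib]
    rw [sum_ite_val (show j < m by omega)
      (fun q => ((List.range k).map F).prod p q * ((r k : ℂ) * z))]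
    rw [sum_ite_val (show j + (k+1) < m by omega)
      (fun q => ((List.range k).map F).prod p q * (-(starRingEnd ℂ) (v k)))]
    have hid : ((List.range k).map F).prod p ⟨j + (k+1), by omega⟩ =
        if (p:ℕ) = j + (k+1) then 1 else 0 := by
      rw [prod_col_id F (fun i => ⟨_, _, rfl⟩) k _ (show j + k < j + (k+1) from by omega) p]
      congr 1
      simp only [eq_iff_iff]
      exact ⟨fun h => by rw [h], fun h => Fin.ext h⟩
    rw [hid, ih hk']
    by_cases hp : (p:ℕ) = j
    · have h2 : ¬ (p:ℕ) = j + (k+1) := by omega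
      rw [if_pos hp, if_pos hp, if_neg h2, Finset.prod_range_succ]
      ring
    · by_cases hp2 : j < (p:ℕ) ∧ (p:ℕ) ≤ j + k
      · have h2 : ¬ (p:ℕ) = j + (k+1) := by omega
        have h3 : j < (p:ℕ) ∧ (p:ℕ) ≤ j + (k+1) := by omega
        rw [if_neg hp, if_pos hp2, if_neg h2, if_neg hp, if_pos h3,
          Finset.prod_Ico_succ_top (show (p:ℕ) - j ≤ k by omega)]
        ring
      · by_cases hp3 : (p:ℕ) = j + (k+1)
        · have h3 : j < (p:ℕ) ∧ (p:ℕ) ≤ j + (k+1) := by omega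
          have h4 : (p:ℕ) - j = k + 1 := by omega
          rw [if_neg hp, if_neg hp2, if_pos hp3, if_neg hp, if_pos h3, h4]
          simp [Finset.Ico_self]
        · have h3 : ¬ (j < (p:ℕ) ∧ (p:ℕ) ≤ j + (k+1)) := by omega
          simp [hp, hp2, hp3, h3]


/-- the first-column entries of the nontrivial block of
P = ∏_{i=1}^{m_j} R_{i;j}(r_i z, v_i) (product in increasing order of i).
Here the parameters r, v are 0-indexed: the paper's (r_i, v_i) is (r (i-1), v (i-1)). -/
theorem prod_Rblock_first_column (m j : ℕ) (hm : 3 ≤ m) (hj : j ≤ m - 2)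
    (z : ℂ) (hz : ‖z‖ = 1) (r : ℕ → ℝ) (v : ℕ → ℂ)
    (hr : ∀ i, 0 ≤ r i) (hrv : ∀ i, (r i) ^ 2 + ‖v i‖ ^ 2 = 1) :
    (((List.range (m - j - 1)).map
          (fun i => Rblock m j (i + 1) ((r i : ℂ) * z) (v i))).prod
        ⟨j, by omega⟩ ⟨j, by omega⟩ =
      (∏ i ∈ Finset.range (m - j - 1), (r i : ℂ)) * z ^ (m - j - 1)) ∧
    (∀ (s : ℕ) (_hs1 : 1 ≤ s) (_hs2 : s ≤ m - j - 1 - 1),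
      ((List.range (m - j - 1)).map
          (fun i => Rblock m j (i + 1) ((r i : ℂ) * z) (v i))).prod
        ⟨j + s, by omega⟩ ⟨j, by omega⟩ =
      -((∏ i ∈ Finset.Ico s (m - j - 1), (r i : ℂ)) * z ^ (m - j - 1 - s) *
          (starRingEnd ℂ) (v (s - 1)))) ∧
    ((List.range (m - j - 1)).map
        (fun i => Rblock m j (i + 1) ((r i : ℂ) * z) (v i))).prod
      ⟨j + (m - j - 1), by omega⟩ ⟨j, by omega⟩ =
      -((starRingEnd ℂ) (v (m - j - 1 - 1))) := by
  have hkm : j + (m - j - 1) < m := by omega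
  refine ⟨?_, ?_, ?_⟩
  · rw [prod_col_j z r v (m - j - 1) hkm]
    rw [if_pos (show ((⟨j, by omega⟩ : Fin m) : ℕ) = j from rfl)]
    rw [Finset.prod_mul_distrib, Finset.prod_const, Finset.card_range]
  · intro s hs1 hs2
    rw [prod_col_j z r v (m - j - 1) hkm]
    have h1 : ¬ ((⟨j + s, by omega⟩ : Fin m) : ℕ) = j := by
      show ¬ j + s = j; omega
    rw [if_neg h1, if_pos ⟨show j < j + s by omega, show j + s ≤ j + (m - j - 1) by omega⟩]
    have h3 : ((⟨j + s, by omega⟩ : Fin m) : ℕ) - j = s := by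
      show j + s - j = s; omega
    rw [h3, Finset.prod_mul_distrib, Finset.prod_const, Nat.card_Ico]
  · rw [prod_col_j z r v (m - j - 1) hkm]
    rw [if_neg (show ¬ ((⟨j + (m - j - 1), by omega⟩ : Fin m) : ℕ) = j from by
      show ¬ j + (m - j - 1) = j; omega)]
    rw [if_pos ⟨show j < j + (m - j - 1) by omega,
      show j + (m - j - 1) ≤ j + (m - j - 1) from le_refl _⟩]
    have h3 : ((⟨j + (m - j - 1), by omega⟩ : Fin m) : ℕ) - j = m - j - 1 := by
      show j + (m - j - 1) - j = m - j - 1; omega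
    rw [h3]
    simp
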